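/- Suppose x : ℝ → ℝ^N is continuously differentiable and x̂ : ℝ → ℝ^N satisfies the delayed gradient flow ẋ(t) = −η∇f(x̂(t)) together with the delay bound ‖x̂(t) − x(t)‖₂ ≤ ∫_{t−c}^{t} ‖ẋ(s)‖₂ ds for all t. Then for all t, (d/dt) f(x(t)) ≤ −(1/(2η))‖ẋ(t)‖₂² + (ηcL²/2)·∫_{t−c}^{t} ‖ẋ(s)‖₂² ds. -/

import Mathlib

open MeasureTheory Filter
open scoped BigOperators

theorem continuous_time_descent
    (N : ℕ) (hN : 0 < N)
    (f : EuclideanSpace ℝ (Fin N) → ℝ)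
    (L η c : ℝ) (hL : 0 < L) (hη : 0 < η) (hc : 0 < c)
    (hdiff : Differentiable ℝ f)
    (hlip : ∀ y z : EuclideanSpace ℝ (Fin N), ‖gradient f y - gradient f z‖ ≤ L * ‖y - z‖)
    (x xhat : ℝ → EuclideanSpace ℝ (Fin N))
    (hx : ContDiff ℝ 1 x)
    (hode : ∀ t, deriv x t = -(η • gradient f (xhat t)))
    (hdelay : ∀ t, ‖xhat t - x t‖ ≤ ∫ s in (t - c)..t, ‖deriv x s‖) :
    ∀ t : ℝ,
      deriv (fun u => f (x u)) t
        ≤ -(1 / (2 * η)) * ‖deriv x t‖ ^ 2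
          + (η * c * L ^ 2 / 2) * ∫ s in (t - c)..t, ‖deriv x s‖ ^ 2 := by
  intro t
  have hxdiff : Differentiable ℝ x := hx.differentiable one_ne_zero
  have hcont : Continuous (deriv x) := hx.continuous_deriv le_rfl
  have hgcont : Continuous fun s => ‖deriv x s‖ := hcont.norm
  have htc : t - c ≤ t := by linarith
  have hgi : IntervalIntegrable (fun s => ‖deriv x s‖) volume (t - c) t :=
    hgcont.intervalIntegrable _ _
  have hg2i : IntervalIntegrable (fun s => ‖deriv x s‖ ^ 2) volume (t - c) t :=
    (hgcont.pow 2).intervalIntegrable _ _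
  set I : ℝ := ∫ s in (t - c)..t, ‖deriv x s‖ with hIdef
  set J : ℝ := ∫ s in (t - c)..t, ‖deriv x s‖ ^ 2 with hJdef
  have hInn : 0 ≤ I :=
    intervalIntegral.integral_nonneg htc fun s _ => norm_nonneg _
  have hJnn : 0 ≤ J :=
    intervalIntegral.integral_nonneg htc fun s _ => sq_nonneg _
  -- Cauchy–Schwarz: I^2 ≤ c * J
  have hCS : I ^ 2 ≤ c * J := by
    have key : ∫ s in (t - c)..t, (2 * c * I) * ‖deriv x s‖
        ≤ ∫ s in (t - c)..t, (c ^ 2 * ‖deriv x s‖ ^ 2 + I ^ 2) := by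
      apply intervalIntegral.integral_mono_on htc (hgi.const_mul _)
        ((hg2i.const_mul _).add intervalIntegrable_const)
      intro s _
      nlinarith [sq_nonneg (c * ‖deriv x s‖ - I)]
    rw [intervalIntegral.integral_const_mul,
      intervalIntegral.integral_add (hg2i.const_mul _) intervalIntegrable_const,
      intervalIntegral.integral_const_mul, intervalIntegral.integral_const] at key
    simp only [smul_eq_mul, ← hIdef, ← hJdef] at key
    -- key : 2*c*I*I ≤ c^2*J + (t - (t-c))*I^2
    nlinarith [key, hc, hJnn]
  -- derivative of the composition
  set v := deriv x t with hvdef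
  set G := gradient f (x t) with hGdef
  set Gh := gradient f (xhat t) with hGhdef
  have hxd : HasDerivAt x v t := (hxdiff t).hasDerivAt
  have hfd : HasGradientAt f G (x t) := (hdiff (x t)).hasGradientAt
  have hcomp : HasDerivAt (fun u => f (x u)) (inner ℝ G v : ℝ) t := by
    have h := hfd.hasFDerivAt.comp_hasDerivAt t hxd
    simp [Function.comp, InnerProductSpace.toDual_apply_apply] at h; exact h
  rw [hcomp.deriv]
  have hv : v = -(η • Gh) := hode t
  have hnv : ‖v‖ = η * ‖Gh‖ := by
    rw [hv, norm_neg, norm_smul, Real.norm_eq_abs, abs_of_pos hη]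
  have hGhv : (inner ℝ Gh v : ℝ) = -(η * ‖Gh‖ ^ 2) := by
    rw [hv, inner_neg_right, real_inner_smul_right, real_inner_self_eq_norm_sq]
  have hsplit : (inner ℝ G v : ℝ) = inner ℝ (G - Gh) v + inner ℝ Gh v := by
    rw [inner_sub_left]; ring
  set D : ℝ := ‖xhat t - x t‖ with hDdef
  have hDnn : 0 ≤ D := norm_nonneg _
  have hDI : D ≤ I := hdelay t
  have hcs2 : (inner ℝ (G - Gh) v : ℝ) ≤ L * D * ‖v‖ := by
    calc (inner ℝ (G - Gh) v : ℝ) ≤ ‖G - Gh‖ * ‖v‖ := real_inner_le_norm _ _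
      _ ≤ (L * ‖x t - xhat t‖) * ‖v‖ :=
          mul_le_mul_of_nonneg_right (hlip _ _) (norm_nonneg _)
      _ = L * D * ‖v‖ := by rw [hDdef, norm_sub_rev]
  have hcs2' : (inner ℝ (G - Gh) v : ℝ) ≤ L * D * (η * ‖Gh‖) := by rwa [hnv] at hcs2
  have hb2 : -(1 / (2 * η)) * ‖v‖ ^ 2 = -(η / 2) * ‖Gh‖ ^ 2 := by
    rw [hnv]; field_simp
  have hD2 : D ^ 2 ≤ c * J := by nlinarith [hCS, hDI, hDnn, hInn]
  have h3 : η * L ^ 2 * D ^ 2 ≤ η * L ^ 2 * (c * J) :=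
    mul_le_mul_of_nonneg_left hD2 (by positivity)
  rw [hsplit, hGhv, hb2]
  nlinarith [hcs2', h3, mul_nonneg hη.le (sq_nonneg (L * D - ‖Gh‖))]
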